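/- (Derandomized CSSP bound, Osinsky's guarantee.) Let A ∈ ℝ^{m×n} and let V ∈ ℝ^{n×r} have orthonormal columns, with r ≤ n. Then there exist distinct indices j_1,…,j_r ∈ {1,…,n} such that the r×r matrix Vᵀ E_J is invertible and ‖A − A E_J (Vᵀ E_J)⁻¹ Vᵀ‖_F² ≤ (r+1) · ‖A − A V Vᵀ‖_F². -/

import Mathlib

open Matrix BigOperators

/-- One step of the ARP recursion: project out the `i`-th row of `W`
(convention: leave `W` unchanged if that row is zero). -/
noncomputable def arpStep {n r : ℕ} (W : Matrix (Fin n) (Fin r) ℝ) (i : Fin n) :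
    Matrix (Fin n) (Fin r) ℝ :=
  if W i = 0 then W
  else W * (1 - (∑ l, (W i l) ^ 2)⁻¹ • Matrix.of fun a b => W i a * W i b)

/-- The ARP iterates `V_k`. -/
noncomputable def arpIter {n r : ℕ} (V : Matrix (Fin n) (Fin r) ℝ) (j : Fin r → Fin n) :
    ℕ → Matrix (Fin n) (Fin r) ℝ
  | 0 => V
  | k + 1 => if h : k < r then arpStep (arpIter V j k) (j ⟨k, h⟩) else arpIter V j k

/-- The ARP weight `w(j) = ∏_{k=1}^r ‖v_k‖²/(r-k+1)`. -/
noncomputable def arpWeight {n r : ℕ} (V : Matrix (Fin n) (Fin r) ℝ) (j : Fin r → Fin n) : ℝ :=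
  ∏ k : Fin r, (∑ l, (arpIter V j k.val (j k) l) ^ 2) / ((r : ℝ) - (k.val : ℝ))

/-- The matrix `E_J` whose `k`-th column is the `j_k`-th standard basis vector of ℝⁿ. -/
def EJ {n k : ℕ} (j : Fin k → Fin n) : Matrix (Fin n) (Fin k) ℝ :=
  Matrix.of fun i l => if i = j l then 1 else 0

/-- Squared Frobenius norm. -/
def frobSq {m n : ℕ} (A : Matrix (Fin m) (Fin n) ℝ) : ℝ := ∑ i, ∑ j, (A i j) ^ 2


lemma det_transpose_mul {r n : ℕ} (A B : Matrix (Fin n) (Fin r) ℝ) :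
    (Aᵀ * B).det = ∑ f : Fin r → Fin n, (∏ k, A (f k) k) * (B.submatrix f id).det := by
  have h1 : Aᵀ * B = Matrix.of fun k => ∑ i, A i k • B i := by
    ext k l; simp [Matrix.mul_apply]
  have h3 := (Matrix.detRowAlternating (R := ℝ) (n := Fin r)).toMultilinearMap.map_sum
      (g := fun k i => A i k • B i)
  simp only [AlternatingMap.coe_multilinearMap] at h3
  have h2 : (Matrix.of fun k => ∑ i, A i k • (B i : Fin r → ℝ)).det
      = Matrix.detRowAlternating (fun k => ∑ i : Fin n, A i k • B i) := rfl
  rw [h1, h2, h3]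
  refine Finset.sum_congr rfl fun f _ => ?_
  have h4 := (Matrix.detRowAlternating (R := ℝ) (n := Fin r)).toMultilinearMap.map_smul_univ
      (fun k => A (f k) k) (fun k => B (f k))
  simp only [AlternatingMap.coe_multilinearMap] at h4
  rw [h4, smul_eq_mul]
  rfl


lemma cauchy_binet {r n : ℕ} (A B : Matrix (Fin n) (Fin r) ℝ) :
    ∑ f : Fin r → Fin n, (A.submatrix f id).det * (B.submatrix f id).det
      = (Nat.factorial r : ℝ) * (Aᵀ * B).det := by
  have sgn_sq : ∀ σ : Equiv.Perm (Fin r),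
      ((Equiv.Perm.sign σ : ℤ) : ℝ) * ((Equiv.Perm.sign σ : ℤ) : ℝ) = 1 := by
    intro σ
    rw [← Int.cast_mul]
    rw [← Units.val_mul, Int.units_mul_self, Units.val_one, Int.cast_one]
  have step1 : ∀ σ : Equiv.Perm (Fin r),
      ∑ f : Fin r → Fin n, (∏ i, A (f (σ i)) i) * (B.submatrix f id).det
        = (((Equiv.Perm.sign σ : ℤ) : ℝ)) * (Aᵀ * B).det := by
    intro σ
    rw [← Fintype.sum_equiv (Equiv.arrowCongr σ (Equiv.refl (Fin n)))
      (fun g => (∏ i, A (g i) i) * ((B.submatrix g id).submatrix σ.symm id).det)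
      (fun f => (∏ i, A (f (σ i)) i) * (B.submatrix f id).det) ?_]
    · simp_rw [Matrix.det_permute, ← mul_assoc, mul_comm _ (((Equiv.Perm.sign σ.symm : ℤ) : ℝ)),
        mul_assoc, ← Finset.mul_sum, ← det_transpose_mul A B]
      congr 2
      simp
    · intro g
      have he : (Equiv.arrowCongr σ (Equiv.refl (Fin n))) g = fun x => g (σ.symm x) := by
        ext x; simp
      rw [he]
      show (∏ i, A (g i) i) * ((B.submatrix g id).submatrix σ.symm id).det
          = (∏ i, A (g (σ.symm (σ i))) i) * (B.submatrix (fun x => g (σ.symm x)) id).det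
      simp [Matrix.submatrix_submatrix, Function.comp_def]
  calc ∑ f : Fin r → Fin n, (A.submatrix f id).det * (B.submatrix f id).det
      = ∑ f : Fin r → Fin n, ∑ σ : Equiv.Perm (Fin r),
          ((Equiv.Perm.sign σ : ℤ) : ℝ) * ((∏ i, A (f (σ i)) i) * (B.submatrix f id).det) := by
        refine Finset.sum_congr rfl fun f _ => ?_
        rw [Matrix.det_apply' (A.submatrix f id), Finset.sum_mul]
        simp [Matrix.submatrix, mul_assoc]
    _ = ∑ σ : Equiv.Perm (Fin r), ((Equiv.Perm.sign σ : ℤ) : ℝ) *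
          ∑ f : Fin r → Fin n, (∏ i, A (f (σ i)) i) * (B.submatrix f id).det := by
        rw [Finset.sum_comm]; simp [Finset.mul_sum]
    _ = ∑ σ : Equiv.Perm (Fin r), ((Equiv.Perm.sign σ : ℤ) : ℝ) *
          (((Equiv.Perm.sign σ : ℤ) : ℝ) * (Aᵀ * B).det) := by
        simp_rw [step1]
    _ = (Nat.factorial r : ℝ) * (Aᵀ * B).det := by
        simp_rw [← mul_assoc, fun σ => sgn_sq σ, one_mul, Finset.sum_const, Finset.card_univ,
          Fintype.card_perm, Fintype.card_fin, nsmul_eq_mul]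


lemma frobSq_nonneg {m n : ℕ} (A : Matrix (Fin m) (Fin n) ℝ) : 0 ≤ frobSq A :=
  Finset.sum_nonneg fun i _ => Finset.sum_nonneg fun j _ => sq_nonneg _

lemma frobSq_eq_trace {m n : ℕ} (A : Matrix (Fin m) (Fin n) ℝ) :
    frobSq A = (A * Aᵀ).trace := by
  simp [frobSq, Matrix.trace, Matrix.diag, Matrix.mul_apply, sq]

lemma frobSq_smul {m n : ℕ} (c : ℝ) (A : Matrix (Fin m) (Fin n) ℝ) :
    frobSq (c • A) = c ^ 2 * frobSq A := by
  simp [frobSq, Finset.mul_sum, mul_pow]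

lemma mul_EJ {m n k : ℕ} (X : Matrix (Fin m) (Fin n) ℝ) (j : Fin k → Fin n) :
    X * EJ j = X.submatrix id j := by
  ext i l
  simp [EJ, Matrix.mul_apply]

lemma transpose_mul_EJ {n r k : ℕ} (V : Matrix (Fin n) (Fin r) ℝ) (j : Fin k → Fin n) :
    Vᵀ * EJ j = (V.submatrix j id)ᵀ := by
  ext a l
  simp [EJ, Matrix.mul_apply]

lemma gram_det {n r : ℕ} (V : Matrix (Fin n) (Fin r) ℝ) (hV : Vᵀ * V = 1)
    (b : Fin n → ℝ) (hb : ∀ p, ∑ a, b a * V a p = 0) (k : Fin r) :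
    ((V.updateCol k b)ᵀ * (V.updateCol k b)).det = ∑ a, (b a) ^ 2 := by
  have hG : (V.updateCol k b)ᵀ * (V.updateCol k b)
      = (1 : Matrix (Fin r) (Fin r) ℝ).updateRow k (Pi.single k (∑ a, (b a) ^ 2)) := by
    ext p q
    by_cases hp : p = k <;> by_cases hq : q = k <;>
      simp [hp, hq, Matrix.mul_apply, Matrix.updateCol_apply, Matrix.updateRow_apply,
        Pi.single_apply, sq]
    · exact hb q
    · simpa [mul_comm] using hb p
    · have := congrFun (congrFun hV p) q
      simpa [Matrix.mul_apply] using this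
  rw [hG]
  have : Pi.single k (∑ a, (b a) ^ 2) = (∑ a, (b a) ^ 2) • (Pi.single k 1 : Fin r → ℝ) := by
    ext q; simp [Pi.single_apply]
  rw [this, Matrix.det_updateRow_smul]
  have h1 : (1 : Matrix (Fin r) (Fin r) ℝ).updateRow k (Pi.single k (1:ℝ)) = 1 := by
    ext p q
    rw [Matrix.updateRow_apply]
    split
    · simp_all [Pi.single_apply, Matrix.one_apply, eq_comm]
    · rfl
  rw [h1, Matrix.det_one, mul_one]

lemma frobSq_sub_mul {m n r : ℕ} (B : Matrix (Fin m) (Fin n) ℝ) (V : Matrix (Fin n) (Fin r) ℝ)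
    (hV : Vᵀ * V = 1) (hBV : B * V = 0) (C : Matrix (Fin m) (Fin r) ℝ) :
    frobSq (B - C * Vᵀ) = frobSq B + frobSq C := by
  rw [frobSq_eq_trace, frobSq_eq_trace, frobSq_eq_trace]
  have h0 : B * (C * Vᵀ)ᵀ = 0 := by
    rw [Matrix.transpose_mul, Matrix.transpose_transpose, ← Matrix.mul_assoc, hBV,
      Matrix.zero_mul]
  have h1 : (C * Vᵀ) * Bᵀ = 0 := by
    rw [Matrix.mul_assoc, ← Matrix.transpose_mul, hBV, Matrix.transpose_zero, Matrix.mul_zero]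
  have h2 : (C * Vᵀ) * (C * Vᵀ)ᵀ = C * Cᵀ := by
    rw [Matrix.transpose_mul, Matrix.transpose_transpose]
    calc C * Vᵀ * (V * Cᵀ) = C * (Vᵀ * V) * Cᵀ := by simp only [Matrix.mul_assoc]
    _ = C * Cᵀ := by rw [hV, Matrix.mul_one]
  rw [Matrix.transpose_sub, Matrix.sub_mul, Matrix.mul_sub, Matrix.mul_sub, h0, h1, h2,
    sub_zero, zero_sub, sub_neg_eq_add, Matrix.trace_add]

lemma key_entry {m n r : ℕ} (B : Matrix (Fin m) (Fin n) ℝ) (V : Matrix (Fin n) (Fin r) ℝ)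
    (j : Fin r → Fin n) (i : Fin m) (k : Fin r) :
    (B * EJ j * adjugate (Vᵀ * EJ j)) i k
      = ((V.updateCol k (fun a => B i a)).submatrix j id).det := by
  rw [transpose_mul_EJ, mul_EJ, ← Matrix.adjugate_transpose]
  have hcr : ((V.submatrix j id).adjugate *ᵥ (fun l => B i (j l))) k
      = ((V.submatrix j id).updateCol k (fun l => B i (j l))).det := by
    rw [← Matrix.cramer_eq_adjugate_mulVec, Matrix.cramer_apply]
  have hmv : (B.submatrix id j * (V.submatrix j id).adjugateᵀ) i k
      = ((V.submatrix j id).adjugate *ᵥ (fun l => B i (j l))) k := by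
    simp [Matrix.mul_apply, Matrix.mulVec, dotProduct, mul_comm]
  rw [hmv, hcr]
  have : (V.submatrix j id).updateCol k (fun l => B i (j l))
      = (V.updateCol k fun a => B i a).submatrix j id := by
    ext l p
    by_cases hp : p = k <;>
      simp [hp, Matrix.updateCol_apply, Matrix.submatrix_apply]
  rw [this]

lemma key_sum {m n r : ℕ} (B : Matrix (Fin m) (Fin n) ℝ) (V : Matrix (Fin n) (Fin r) ℝ)
    (hV : Vᵀ * V = 1) (hBV : B * V = 0) :
    ∑ j : Fin r → Fin n, frobSq (B * EJ j * adjugate (Vᵀ * EJ j))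
      = (r : ℝ) * (Nat.factorial r : ℝ) * frobSq B := by
  have h1 : ∀ j : Fin r → Fin n, frobSq (B * EJ j * adjugate (Vᵀ * EJ j))
      = ∑ i, ∑ k, ((V.updateCol k (fun a => B i a)).submatrix j id).det ^ 2 := by
    intro j
    unfold frobSq
    exact Finset.sum_congr rfl fun i _ => Finset.sum_congr rfl fun k _ => by
      rw [key_entry]
  simp_rw [h1]
  rw [Finset.sum_comm]
  have h2 : ∀ i, ∑ k : Fin r, ∑ j : Fin r → Fin n,
      ((V.updateCol k (fun a => B i a)).submatrix j id).det ^ 2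
      = (r : ℝ) * (Nat.factorial r : ℝ) * ∑ a, (B i a) ^ 2 := by
    intro i
    have h3 : ∀ k : Fin r, ∑ j : Fin r → Fin n,
        ((V.updateCol k (fun a => B i a)).submatrix j id).det ^ 2
        = (Nat.factorial r : ℝ) * ∑ a, (B i a) ^ 2 := by
      intro k
      have hcb := cauchy_binet (V.updateCol k (fun a => B i a))
        (V.updateCol k (fun a => B i a))
      simp_rw [← sq] at hcb
      rw [hcb, gram_det V hV (fun a => B i a) (fun p => by
        have := congrFun (congrFun hBV i) p
        simpa [Matrix.mul_apply] using this) k]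
    simp_rw [h3, Finset.sum_const, Finset.card_univ, Fintype.card_fin, nsmul_eq_mul]
    ring
  have h4 : ∀ i, ∑ j : Fin r → Fin n, ∑ k : Fin r,
      ((V.updateCol k (fun a => B i a)).submatrix j id).det ^ 2
      = (r : ℝ) * (Nat.factorial r : ℝ) * ∑ a, (B i a) ^ 2 := by
    intro i; rw [Finset.sum_comm]; exact h2 i
  simp_rw [h4]
  unfold frobSq
  rw [Finset.mul_sum]

/-- derandomized CSSP bound, Osinsky's guarantee: there exist distinct
indices `j_1,…,j_r` with `Vᵀ E_J` invertible and
`‖A − A E_J (Vᵀ E_J)⁻¹ Vᵀ‖_F² ≤ (r+1)‖A − AVVᵀ‖_F²`. -/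
theorem derandomized_cssp_bound {m n r : ℕ} (hrn : r ≤ n)
    (A : Matrix (Fin m) (Fin n) ℝ)
    (V : Matrix (Fin n) (Fin r) ℝ) (hV : Vᵀ * V = 1) :
    ∃ j : Fin r → Fin n, Function.Injective j ∧ IsUnit (Vᵀ * EJ j).det ∧
      frobSq (A - A * EJ j * (Vᵀ * EJ j)⁻¹ * Vᵀ) ≤
        ((r : ℝ) + 1) * frobSq (A - A * V * Vᵀ) := by
  set B := A - A * V * Vᵀ with hB
  have hBV : B * V = 0 := by
    rw [hB, Matrix.sub_mul, Matrix.mul_assoc (A * V) Vᵀ V, hV, Matrix.mul_one, sub_self]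
  set w : (Fin r → Fin n) → ℝ := fun j => ((V.submatrix j id).det) ^ 2 with hw
  have hwnn : ∀ j, 0 ≤ w j := fun j => sq_nonneg _
  have hdetVE : ∀ j : Fin r → Fin n, (Vᵀ * EJ j).det = (V.submatrix j id).det := by
    intro j; rw [transpose_mul_EJ V j, Matrix.det_transpose]
  have hsumw : ∑ j : Fin r → Fin n, w j = (Nat.factorial r : ℝ) := by
    have h := cauchy_binet V V
    rw [hV, Matrix.det_one, mul_one] at h
    simpa [hw, sq] using h
  have hkey : ∑ j : Fin r → Fin n, w j * frobSq (B * EJ j * (Vᵀ * EJ j)⁻¹)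
      ≤ (r : ℝ) * (Nat.factorial r : ℝ) * frobSq B := by
    rw [← key_sum B V hV hBV]
    refine Finset.sum_le_sum fun j _ => ?_
    rw [Matrix.inv_def, Matrix.mul_smul, frobSq_smul]
    by_cases hd : IsUnit (Vᵀ * EJ j).det
    · have hd0 : (Vᵀ * EJ j).det ≠ 0 := hd.ne_zero
      have hwj : w j = (Vᵀ * EJ j).det ^ 2 := by rw [hw, hdetVE]
      rw [hwj, Ring.inverse_eq_inv, ← mul_assoc]
      have : (Vᵀ * EJ j).det ^ 2 * ((Vᵀ * EJ j).det⁻¹) ^ 2 = 1 := by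
        field_simp
      rw [this, one_mul]
    · rw [Ring.inverse_non_unit _ hd]
      have h0 : w j * ((0:ℝ) ^ 2 * frobSq (B * EJ j * adjugate (Vᵀ * EJ j))) = 0 := by ring
      rw [h0]
      exact frobSq_nonneg _
  have hex : ∃ j : Fin r → Fin n, w j ≠ 0 ∧
      frobSq (B * EJ j * (Vᵀ * EJ j)⁻¹) ≤ (r : ℝ) * frobSq B := by
    by_contra hcon
    push_neg at hcon
    have hw0 : ∃ j0 : Fin r → Fin n, w j0 ≠ 0 := by
      by_contra h
      push_neg at h
      rw [Finset.sum_eq_zero (fun j _ => h j)] at hsumw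
      exact (Nat.cast_ne_zero.mpr (Nat.factorial_ne_zero r)) hsumw.symm
    obtain ⟨j0, hj0⟩ := hw0
    have hlt : ∑ j : Fin r → Fin n, w j * ((r : ℝ) * frobSq B)
        < ∑ j : Fin r → Fin n, w j * frobSq (B * EJ j * (Vᵀ * EJ j)⁻¹) := by
      refine Finset.sum_lt_sum (fun j _ => ?_) ⟨j0, Finset.mem_univ _, ?_⟩
      · by_cases h : w j = 0
        · simp [h]
        · exact mul_le_mul_of_nonneg_left (le_of_lt (hcon j h)) (hwnn j)
      · exact mul_lt_mul_of_pos_left (hcon j0 hj0) (lt_of_le_of_ne (hwnn j0) (Ne.symm hj0))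
    rw [← Finset.sum_mul, hsumw] at hlt
    have hcontra := lt_of_lt_of_le hlt hkey
    have heq : (Nat.factorial r : ℝ) * ((r : ℝ) * frobSq B)
        = (r : ℝ) * (Nat.factorial r : ℝ) * frobSq B := by ring
    rw [heq] at hcontra
    exact lt_irrefl _ hcontra
  obtain ⟨j, hwj, hXj⟩ := hex
  have hdet0 : (V.submatrix j id).det ≠ 0 := by
    intro h
    exact hwj (by rw [hw]; simp [h])
  have hunit : IsUnit (Vᵀ * EJ j).det := by
    rw [isUnit_iff_ne_zero, hdetVE]
    exact hdet0
  refine ⟨j, ?_, hunit, ?_⟩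
  · intro a b hab
    by_contra hne
    exact hdet0 (Matrix.det_zero_of_row_eq hne (funext fun p => by
      simp [Matrix.submatrix_apply, hab]))
  · have hM : (Vᵀ * EJ j) * (Vᵀ * EJ j)⁻¹ = 1 := Matrix.mul_nonsing_inv _ hunit
    have h5 : A * V * Vᵀ * EJ j * (Vᵀ * EJ j)⁻¹ * Vᵀ = A * V * Vᵀ := by
      calc A * V * Vᵀ * EJ j * (Vᵀ * EJ j)⁻¹ * Vᵀ
          = A * V * ((Vᵀ * EJ j) * (Vᵀ * EJ j)⁻¹) * Vᵀ := by simp only [Matrix.mul_assoc]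
        _ = A * V * Vᵀ := by rw [hM, Matrix.mul_one]
    have halg : A - A * EJ j * (Vᵀ * EJ j)⁻¹ * Vᵀ
        = B - (B * EJ j * (Vᵀ * EJ j)⁻¹) * Vᵀ := by
      rw [hB, Matrix.sub_mul, Matrix.sub_mul, Matrix.sub_mul, h5]
      abel
    rw [halg, frobSq_sub_mul B V hV hBV]
    have hr1 : ((r : ℝ) + 1) * frobSq B = frobSq B + (r : ℝ) * frobSq B := by ring
    rw [hr1]
    exact add_le_add_right hXj _
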